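/- Let S_1,...,S_N be a sequence over a field F. For each k, the rows g_1^k, g_2^k of the matrix R^k produced by the iterative algorithm form a minimal Gröbner basis (with respect to the top ordering) of the row space of the 2×2 matrix [[x^{k+1}, 0], [−(S_k x^k + S_{k-1} x^{k-1} + ... + S_1 x), 1]] over F[x]. -/

import Mathlib

open Polynomial

open scoped Classical

/-- Support of a polynomial vector: monomials `(degree, position)` ordered lexicographically,
which is the term-over-position (top) ordering. -/
noncomputable def vsupp {R : Type*} [CommRing R] {q : ℕ} (f : Fin q → R[X]) :
    Finset (Lex (ℕ × Fin q)) :=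
  Finset.univ.biUnion fun i => (f i).support.image fun α => toLex (α, i)

/-- Leading monomial w.r.t. the top ordering (`⊥` for the zero vector). -/
noncomputable def vlm {R : Type*} [CommRing R] {q : ℕ} (f : Fin q → R[X]) :
    WithBot (Lex (ℕ × Fin q)) := (vsupp f).max

/-- Degree of the leading monomial (junk value `0` for the zero vector). -/
noncomputable def vdeg {R : Type*} [CommRing R] {q : ℕ} (f : Fin q → R[X]) : ℕ :=
  WithBot.unbotD 0 ((vlm f).map fun m => (ofLex m).1)

/-- Leading position. -/
noncomputable def vlpos {R : Type*} [CommRing R] {q : ℕ} (f : Fin q → R[X]) : WithBot (Fin q) :=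
  (vlm f).map fun m => (ofLex m).2

/-- Leading coefficient. -/
noncomputable def vlc {R : Type*} [CommRing R] {q : ℕ} (f : Fin q → R[X]) : R :=
  WithBot.unbotD 0 ((vlm f).map fun m => (f (ofLex m).2).coeff (ofLex m).1)

/-- Leading term of a polynomial vector, as a polynomial vector. -/
noncomputable def vlt {R : Type*} [CommRing R] {q : ℕ} (f : Fin q → R[X]) : Fin q → R[X] :=
  WithBot.unbotD 0 ((vlm f).map fun m => fun j : Fin q =>
    if j = (ofLex m).2 then C ((f (ofLex m).2).coeff (ofLex m).1) * X ^ (ofLex m).1 else 0)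

/-- The leading term submodule `L(F)`. -/
noncomputable def ltSubmodule {R : Type*} [CommRing R] {q : ℕ} (S : Set (Fin q → R[X])) :
    Submodule R[X] (Fin q → R[X]) :=
  Submodule.span R[X] (vlt '' S)

/-- `G` is a Gröbner basis of `M`: `G ⊆ M` and `L(G) = L(M)`. -/
def IsGroebner {R : Type*} [CommRing R] {q : ℕ} (M : Submodule R[X] (Fin q → R[X]))
    (G : Finset (Fin q → R[X])) : Prop :=
  (G : Set (Fin q → R[X])) ⊆ M ∧
    ltSubmodule (G : Set (Fin q → R[X])) = ltSubmodule (M : Set (Fin q → R[X]))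

/-- One-step reduction of `f` to `h` modulo the finite set `Fs` (Adams–Loustaunau Def. 4.1.1). -/
def ReducesOneStep {R : Type*} [CommRing R] {q : ℕ} (Fs : Finset (Fin q → R[X]))
    (f h : Fin q → R[X]) : Prop :=
  f ≠ 0 ∧ ∃ (m : ℕ) (jv : Fin m → Fin q → R[X]) (α : Fin m → ℕ) (β : Fin m → R),
    0 < m ∧ (∀ i, jv i ∈ Fs) ∧ (∀ i, jv i ≠ 0) ∧ Function.Injective jv ∧ (∀ i, β i ≠ 0) ∧
    (∀ i, vlm f = (vlm (jv i)).map fun mm => toLex (α i + (ofLex mm).1, (ofLex mm).2)) ∧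
    vlt f = ∑ i, (C (β i) * X ^ α i) • vlt (jv i) ∧
    h = f - ∑ i, (C (β i) * X ^ α i) • jv i

/-- Minimal Gröbner basis: a Gröbner basis each of whose elements is irreducible
modulo the others. -/
def IsMinimalGroebner {R : Type*} [CommRing R] {q : ℕ} (M : Submodule R[X] (Fin q → R[X]))
    (G : Finset (Fin q → R[X])) : Prop :=
  IsGroebner M G ∧ ∀ g ∈ G, ∀ h, ¬ ReducesOneStep (G.erase g) g h

/-- The value at time `-n` of the trajectory obtained by applying the polynomial row vector
`f = (γ, λ)` (in the shift operator `σ`) to the trajectory `b_k`, which ends with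
`…, (1,0), (0,S_1), …, (0,S_k)`. -/
noncomputable def errVal {R : Type*} [CommRing R] (S : ℕ → R) (k : ℕ)
    (f : Fin 2 → R[X]) (n : ℕ) : R :=
  ∑ i ∈ (f 0).support, (f 0).coeff i * (if n + i = k then 1 else 0) +
  ∑ i ∈ (f 1).support, (f 1).coeff i * (if n + i < k then S (k - (n + i)) else 0)

/-- The field algorithm (Algorithm 1): `g k i` is row `i+1` of the matrix `R^k`.
Initialization `R^0 = [[x,0],[0,1]]`, and at step `k` the pivot `i⋆` is the index with
`Δ_{i⋆} ≠ 0` of minimal leading monomial; row 1 becomes `(x/Δ_{i⋆}) g_{i⋆}^{k-1}` and row 2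
becomes `-Δ_2 g_1^{k-1} + Δ_1 g_2^{k-1}`, where `Δ_i = errVal S k (g (k-1) i) 0`. -/
def FieldAlgRun {F : Type*} [Field F] (S : ℕ → F) (N : ℕ)
    (g : ℕ → Fin 2 → Fin 2 → Polynomial F) : Prop :=
  g 0 0 = ![X, 0] ∧ g 0 1 = ![0, 1] ∧
  ∀ k, 1 ≤ k → k ≤ N →
    ∃ istar : Fin 2,
      errVal S k (g (k - 1) istar) 0 ≠ 0 ∧
      (∀ i : Fin 2, errVal S k (g (k - 1) i) 0 ≠ 0 →
        vlm (g (k - 1) istar) ≤ vlm (g (k - 1) i)) ∧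
      g k 0 = (C (errVal S k (g (k - 1) istar) 0)⁻¹ * X) • g (k - 1) istar ∧
      g k 1 = (C (- errVal S k (g (k - 1) 1) 0)) • g (k - 1) 0 +
              (C (errVal S k (g (k - 1) 0) 0)) • g (k - 1) 1


section Toolkit
variable {F : Type*} [Field F] {q : ℕ}

lemma mem_vsupp {f : Fin q → F[X]} {i : ℕ} {j : Fin q} :
    toLex (i, j) ∈ vsupp f ↔ (f j).coeff i ≠ 0 := by
  simp only [vsupp, Finset.mem_biUnion, Finset.mem_univ, true_and, Finset.mem_image,
    Polynomial.mem_support_iff, toLex_inj, Prod.mk.injEq]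
  constructor
  · rintro ⟨j', α, hα, rfl, rfl⟩; exact hα
  · intro h; exact ⟨j, i, h, rfl, rfl⟩

lemma vlm_eq_coe_iff {f : Fin q → F[X]} {d : ℕ} {p : Fin q} :
    vlm f = (toLex (d, p) : Lex (ℕ × Fin q)) ↔
      (f p).coeff d ≠ 0 ∧ ∀ i j, (f j).coeff i ≠ 0 → toLex (i, j) ≤ toLex (d, p) := by
  rw [vlm]
  constructor
  · intro h
    refine ⟨mem_vsupp.1 (Finset.mem_of_max h), fun i j hij => ?_⟩
    have := Finset.le_max (mem_vsupp.2 hij)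
    rw [h] at this
    exact_mod_cast this
  · rintro ⟨h1, h2⟩
    refine le_antisymm (Finset.max_le ?_) (Finset.le_max (mem_vsupp.2 h1))
    rintro ⟨i, j⟩ hm
    exact WithBot.coe_le_coe.2 (h2 i j (mem_vsupp.1 hm))

lemma vsupp_zero : vsupp (0 : Fin q → F[X]) = ∅ := by
  ext m
  obtain ⟨i, j⟩ := m
  simp [vsupp]
  constructor
  · intro h; obtain ⟨_, _, h⟩ := Finset.mem_biUnion.1 h; exact absurd h (Finset.notMem_empty _)
  · intro h; exact absurd h (Finset.notMem_empty _)

lemma vlm_zero : vlm (0 : Fin q → F[X]) = ⊥ := by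
  rw [vlm, vsupp_zero]; rfl

lemma vlt_zero : vlt (0 : Fin q → F[X]) = 0 := by
  rw [vlt, vlm_zero]; rfl

lemma coeff_eq_zero_of_vlm_lt {f : Fin q → F[X]} {i : ℕ} {j : Fin q}
    (h : vlm f < (toLex (i, j) : Lex (ℕ × Fin q))) : (f j).coeff i = 0 := by
  by_contra hc
  exact absurd (Finset.le_max (mem_vsupp.2 hc)) (not_le.2 h)

lemma ne_zero_of_vlm_eq_coe {f : Fin q → F[X]} {d : ℕ} {p : Fin q}
    (h : vlm f = (toLex (d, p) : Lex (ℕ × Fin q))) : f ≠ 0 := by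
  intro hf
  rw [hf, vlm_zero] at h
  exact absurd h (by simp)

lemma natDegree_eq_of_vlm {f : Fin q → F[X]} {d : ℕ} {p : Fin q}
    (h : vlm f = (toLex (d, p) : Lex (ℕ × Fin q))) : (f p).natDegree = d := by
  obtain ⟨h1, h2⟩ := vlm_eq_coe_iff.1 h
  refine le_antisymm ?_ (Polynomial.le_natDegree_of_ne_zero h1)
  have hfp : f p ≠ 0 := fun hz => h1 (by simp [hz])
  have := h2 (f p).natDegree p (by simpa using Polynomial.leadingCoeff_ne_zero.2 hfp)
  rcases Prod.Lex.le_iff.1 this with h | ⟨h, _⟩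
  · exact le_of_lt h
  · exact le_of_eq h

end Toolkit

section Toolkit2
variable {F : Type*} [Field F] {q : ℕ}

lemma coeff_bound_of_vlm {f : Fin q → F[X]} {d : ℕ} {p : Fin q}
    (h : vlm f = (toLex (d, p) : Lex (ℕ × Fin q))) {j : Fin q} :
    (f j).natDegree ≤ d ∧ (p < j → f j ≠ 0 → (f j).natDegree < d) := by
  obtain ⟨h1, h2⟩ := vlm_eq_coe_iff.1 h
  by_cases hfj : f j = 0
  · simp [hfj]
  · have hb := h2 (f j).natDegree j (by simpa using Polynomial.leadingCoeff_ne_zero.2 hfj)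
    rcases Prod.Lex.le_iff.1 hb with hlt | ⟨heq, hle⟩
    · exact ⟨le_of_lt hlt, fun _ _ => hlt⟩
    · exact ⟨le_of_eq heq, fun hpj _ => absurd hle (not_le.2 hpj)⟩

lemma vlm_smul {a : F[X]} (ha : a ≠ 0) {f : Fin q → F[X]} {d : ℕ} {p : Fin q}
    (h : vlm f = (toLex (d, p) : Lex (ℕ × Fin q))) :
    vlm (a • f) = (toLex (a.natDegree + d, p) : Lex (ℕ × Fin q)) := by
  obtain ⟨h1, h2⟩ := vlm_eq_coe_iff.1 h
  have hnd := natDegree_eq_of_vlm h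
  have hfp : f p ≠ 0 := fun hz => h1 (by simp [hz])
  rw [vlm_eq_coe_iff]
  constructor
  · have : ((a • f) p) = a * f p := rfl
    rw [this, ← hnd, Polynomial.coeff_mul_degree_add_degree]
    exact mul_ne_zero (Polynomial.leadingCoeff_ne_zero.2 ha) (Polynomial.leadingCoeff_ne_zero.2 hfp)
  · intro i j hij
    have haj : (a • f) j = a * f j := rfl
    rw [haj] at hij
    have hfj : f j ≠ 0 := by rintro hz; rw [hz, mul_zero] at hij; simp at hij
    have hile : i ≤ a.natDegree + (f j).natDegree := by
      have := Polynomial.le_natDegree_of_ne_zero hij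
      rwa [Polynomial.natDegree_mul ha hfj] at this
    obtain ⟨hle, hlt⟩ := coeff_bound_of_vlm h (j := j)
    rw [Prod.Lex.le_iff]
    rcases lt_or_eq_of_le (le_trans hile (by omega) : i ≤ a.natDegree + d) with h' | h'
    · exact Or.inl h'
    · right
      refine ⟨h', ?_⟩
      by_contra hpj
      push_neg at hpj
      have := hlt hpj hfj
      omega

lemma vlt_eq {f : Fin q → F[X]} {d : ℕ} {p : Fin q}
    (h : vlm f = (toLex (d, p) : Lex (ℕ × Fin q))) :
    vlt f = fun j => if j = p then C ((f p).coeff d) * X ^ d else 0 := by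
  rw [vlt, h]
  rfl

lemma vlt_smul {a : F[X]} (ha : a ≠ 0) {f : Fin q → F[X]} {d : ℕ} {p : Fin q}
    (h : vlm f = (toLex (d, p) : Lex (ℕ × Fin q))) :
    vlt (a • f) = (C a.leadingCoeff * X ^ a.natDegree) • vlt f := by
  have hnd := natDegree_eq_of_vlm h
  rw [vlt_eq (vlm_smul ha h), vlt_eq h]
  funext j
  simp only [Pi.smul_apply, smul_eq_mul]
  by_cases hj : j = p
  · subst hj
    rw [if_pos rfl, if_pos rfl]
    have hcoeff : (a * f j).coeff (a.natDegree + d) = a.leadingCoeff * (f j).coeff d := by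
      conv_lhs => rw [← hnd]
      rw [Polynomial.coeff_mul_degree_add_degree]
      unfold Polynomial.leadingCoeff
      rw [hnd]
    rw [hcoeff, Polynomial.C_mul]
    ring
  · rw [if_neg hj, if_neg hj, mul_zero]

lemma vlm_add_eq_right {f g : Fin q → F[X]} (h : vlm f < vlm g) :
    vlm (f + g) = vlm g := by
  rcases hm : vlm g with _ | m
  · rw [hm] at h; exact absurd h (not_lt_bot (α := WithBot (Lex (ℕ × Fin q))))
  obtain ⟨d, p⟩ := m
  have hm' : vlm g = ((toLex (d, p) : Lex (ℕ × Fin q)) : WithBot (Lex (ℕ × Fin q))) := hm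
  rw [hm'] at h
  show vlm (f + g) = ((toLex (d, p) : Lex (ℕ × Fin q)) : WithBot (Lex (ℕ × Fin q)))
  obtain ⟨h1, h2⟩ := vlm_eq_coe_iff.1 hm'
  rw [vlm_eq_coe_iff]
  constructor
  · have hf0 : (f p).coeff d = 0 := coeff_eq_zero_of_vlm_lt h
    have hfg : (f + g) p = f p + g p := rfl
    rw [hfg, Polynomial.coeff_add, hf0, zero_add]
    exact h1
  · intro i j hij
    have hfg : (f + g) j = f j + g j := rfl
    rw [hfg, Polynomial.coeff_add] at hij
    rcases (by by_contra hc; push_neg at hc; rw [hc.1, hc.2, add_zero] at hij; exact hij rfl :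
        (f j).coeff i ≠ 0 ∨ (g j).coeff i ≠ 0) with hc | hc
    · have hle := Finset.le_max (mem_vsupp.2 hc)
      have hlt := lt_of_le_of_lt hle h
      exact_mod_cast le_of_lt hlt
    · exact h2 i j hc

lemma vlt_add_eq_right {f g : Fin q → F[X]} (h : vlm f < vlm g) :
    vlt (f + g) = vlt g := by
  rcases hm : vlm g with _ | m
  · rw [hm] at h; exact absurd h (not_lt_bot (α := WithBot (Lex (ℕ × Fin q))))
  obtain ⟨d, p⟩ := m
  have hm' : vlm g = ((toLex (d, p) : Lex (ℕ × Fin q)) : WithBot (Lex (ℕ × Fin q))) := hm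
  have hadd := vlm_add_eq_right h
  rw [vlt_eq hm', vlt_eq (hadd.trans hm')]
  funext j
  by_cases hj : j = p
  · subst hj
    rw [if_pos rfl, if_pos rfl]
    have hfg : (f + g) j = f j + g j := rfl
    rw [hfg, Polynomial.coeff_add, coeff_eq_zero_of_vlm_lt (hm' ▸ h), zero_add]
  · rw [if_neg hj, if_neg hj]

end Toolkit2

section Membership
variable {F : Type*} [Field F]

noncomputable def sPoly (S : ℕ → F) (k : ℕ) : F[X] :=
  ∑ i ∈ Finset.range k, C (S (i + 1)) * X ^ (i + 1)

lemma coeff_sPoly (S : ℕ → F) (k n : ℕ) :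
    (sPoly S k).coeff n = if 1 ≤ n ∧ n ≤ k then S n else 0 := by
  rw [sPoly, Polynomial.finset_sum_coeff]
  simp only [Polynomial.coeff_C_mul, Polynomial.coeff_X_pow, mul_ite, mul_one, mul_zero]
  by_cases h : 1 ≤ n ∧ n ≤ k
  · rw [if_pos h]
    rw [Finset.sum_eq_single (n - 1)]
    · rw [if_pos (by omega)]
      congr 1
      omega
    · intro b _ hb
      rw [if_neg (by omega)]
    · intro hn
      simp only [Finset.mem_range] at hn
      omega
  · rw [if_neg h]
    apply Finset.sum_eq_zero
    intro i hi
    simp only [Finset.mem_range] at hi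
    rw [if_neg (by omega)]

lemma coeff_sPoly_zero (S : ℕ → F) (k : ℕ) : (sPoly S k).coeff 0 = 0 := by
  rw [coeff_sPoly]; simp

lemma mul_coeff_support (p s : F[X]) (hs : s.coeff 0 = 0) (N : ℕ) :
    (p * s).coeff N = ∑ i ∈ p.support, p.coeff i * s.coeff (N - i) := by
  rw [Polynomial.coeff_mul, Finset.Nat.sum_antidiagonal_eq_sum_range_succ_mk]
  have h1 : ∑ i ∈ Finset.range (N + 1), p.coeff i * s.coeff (N - i)
      = ∑ i ∈ Finset.range (N + 1) ∪ p.support, p.coeff i * s.coeff (N - i) := by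
    apply Finset.sum_subset Finset.subset_union_left
    intro i _ hi
    simp only [Finset.mem_range, not_lt] at hi
    have : N - i = 0 := by omega
    rw [this, hs, mul_zero]
  have h2 : ∑ i ∈ p.support, p.coeff i * s.coeff (N - i)
      = ∑ i ∈ Finset.range (N + 1) ∪ p.support, p.coeff i * s.coeff (N - i) := by
    apply Finset.sum_subset Finset.subset_union_right
    intro i _ hi
    rw [Polynomial.notMem_support_iff.1 hi, zero_mul]
  rw [h1, ← h2]

lemma errVal_zero_eq_coeff (S : ℕ → F) (k : ℕ) (f : Fin 2 → F[X]) :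
    errVal S k f 0 = (f 0 + f 1 * sPoly S k).coeff k := by
  rw [errVal, Polynomial.coeff_add, mul_coeff_support _ _ (coeff_sPoly_zero S k)]
  congr 1
  · simp only [zero_add]
    rw [Finset.sum_congr rfl (fun i _ => by rw [mul_ite, mul_one, mul_zero]),
      Finset.sum_ite_eq' (f 0).support k (fun i => (f 0).coeff i)]
    by_cases h : k ∈ (f 0).support
    · rw [if_pos h]
    · rw [if_neg h, Polynomial.notMem_support_iff.1 h]
  · apply Finset.sum_congr rfl
    intro i _
    congr 1
    rw [coeff_sPoly]
    simp only [zero_add]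
    by_cases h : i < k
    · rw [if_pos h, if_pos (by omega)]
    · rw [if_neg h, if_neg (by omega)]

lemma mem_M_iff (S : ℕ → F) (k : ℕ) (f : Fin 2 → F[X]) :
    f ∈ Submodule.span (Polynomial F)
        ({![X ^ (k + 1), 0], ![-(sPoly S k), 1]} : Set (Fin 2 → Polynomial F)) ↔
      X ^ (k + 1) ∣ (f 0 + f 1 * sPoly S k) := by
  rw [Submodule.mem_span_pair]
  constructor
  · rintro ⟨a, b, hab⟩
    have h0 : f 0 = a * X ^ (k + 1) + b * (-(sPoly S k)) := by
      rw [← hab]; simp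
    have h1 : f 1 = b := by
      rw [← hab]; simp
    refine ⟨a, ?_⟩
    rw [h0, h1]; ring
  · rintro ⟨c, hc⟩
    refine ⟨c, f 1, ?_⟩
    funext j
    fin_cases j
    · show c * X ^ (k + 1) + f 1 * (-(sPoly S k)) = f 0
      linear_combination -hc
    · show c * 0 + f 1 * 1 = f 1
      ring

end Membership

section Core
variable {F : Type*} [Field F]

lemma coeff_mul_eq_zero_hi {p q : F[X]} {a b : ℕ} (hp : ∀ i, a < i → p.coeff i = 0)
    (hq : ∀ j, b < j → q.coeff j = 0) {N : ℕ} (hN : a + b < N) : (p * q).coeff N = 0 := by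
  rw [Polynomial.coeff_mul]
  apply Finset.sum_eq_zero
  rintro ⟨x, y⟩ hxy
  rw [Finset.HasAntidiagonal.mem_antidiagonal] at hxy
  simp only
  rcases le_or_gt x a with h | h
  · rw [hq y (by omega), mul_zero]
  · rw [hp x h, zero_mul]

lemma coeff_mul_eq_zero_ge {p q : F[X]} {a b : ℕ} (hp : ∀ i, a ≤ i → p.coeff i = 0)
    (hq : ∀ j, b < j → q.coeff j = 0) {N : ℕ} (hN : a + b ≤ N) : (p * q).coeff N = 0 := by
  rw [Polynomial.coeff_mul]
  apply Finset.sum_eq_zero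
  rintro ⟨x, y⟩ hxy
  rw [Finset.HasAntidiagonal.mem_antidiagonal] at hxy
  simp only
  rcases lt_or_ge x a with h | h
  · rw [hq y (by omega), mul_zero]
  · rw [hp x h, zero_mul]

lemma coeff_mul_at {p q : F[X]} {a b : ℕ} (hp : ∀ i, a < i → p.coeff i = 0)
    (hq : ∀ j, b < j → q.coeff j = 0) : (p * q).coeff (a + b) = p.coeff a * q.coeff b := by
  rw [Polynomial.coeff_mul]
  rw [Finset.sum_eq_single (a, b)]
  · rintro ⟨x, y⟩ hxy hne
    rw [Finset.HasAntidiagonal.mem_antidiagonal] at hxy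
    simp only
    rcases lt_or_ge a x with h | h
    · rw [hp x h, zero_mul]
    · rcases eq_or_lt_of_le h with rfl | h
      · exact absurd (by omega : y = b) (fun hy => hne (by rw [hy]))
      · rw [hq y (by omega), mul_zero]
  · intro hmem
    exact absurd (Finset.HasAntidiagonal.mem_antidiagonal.2 (rfl : (a, b).1 + (a, b).2 = a + b)) hmem

lemma span_pair_components {S : ℕ → F} {k : ℕ} {f : Fin 2 → Polynomial F}
    (hf : f ∈ Submodule.span (Polynomial F)
      ({![X ^ (k + 1), 0], ![-(sPoly S k), 1]} : Set (Fin 2 → Polynomial F))) :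
    ∃ a b, f 0 = a * X ^ (k + 1) + b * (-(sPoly S k)) ∧ f 1 = b := by
  obtain ⟨a, b, hab⟩ := Submodule.mem_span_pair.1 hf
  refine ⟨a, b, ?_, ?_⟩
  · rw [← hab]; simp
  · rw [← hab]; simp

lemma core_groebner (S : ℕ → F) (k d0 d1 : ℕ) (f0 f1 : Fin 2 → Polynomial F)
    (h0 : vlm f0 = (toLex (d0, (0 : Fin 2)) : Lex (ℕ × Fin 2)))
    (h1 : vlm f1 = (toLex (d1, (1 : Fin 2)) : Lex (ℕ × Fin 2)))
    (hsum : d0 + d1 = k + 1)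
    (hm0 : f0 ∈ Submodule.span (Polynomial F)
      ({![X ^ (k + 1), 0], ![-(sPoly S k), 1]} : Set (Fin 2 → Polynomial F)))
    (hm1 : f1 ∈ Submodule.span (Polynomial F)
      ({![X ^ (k + 1), 0], ![-(sPoly S k), 1]} : Set (Fin 2 → Polynomial F))) :
    IsMinimalGroebner
      (Submodule.span (Polynomial F)
        ({![X ^ (k + 1), 0], ![-(sPoly S k), 1]} : Set (Fin 2 → Polynomial F)))
      ({f0, f1} : Finset (Fin 2 → Polynomial F)) := by
  have hne0 : f0 ≠ 0 := ne_zero_of_vlm_eq_coe h0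
  have hne1 : f1 ≠ 0 := ne_zero_of_vlm_eq_coe h1
  have hvlmne : vlm f0 ≠ vlm f1 := by
    rw [h0, h1]
    intro hc
    have := toLex_inj.1 (WithBot.coe_inj.1 hc)
    simp [Prod.ext_iff] at this
  have hne01 : f0 ≠ f1 := fun h => hvlmne (by rw [h])
  -- coefficient bounds
  have hz00 : ∀ i, d0 < i → (f0 0).coeff i = 0 := fun i hi =>
    Polynomial.coeff_eq_zero_of_natDegree_lt (lt_of_le_of_lt (coeff_bound_of_vlm h0).1 hi)
  have hz11 : ∀ i, d1 < i → (f1 1).coeff i = 0 := fun i hi =>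
    Polynomial.coeff_eq_zero_of_natDegree_lt (lt_of_le_of_lt (coeff_bound_of_vlm h1).1 hi)
  have hz10 : ∀ i, d1 < i → (f1 0).coeff i = 0 := fun i hi =>
    Polynomial.coeff_eq_zero_of_natDegree_lt (lt_of_le_of_lt (coeff_bound_of_vlm h1).1 hi)
  have hz01 : ∀ i, d0 ≤ i → (f0 1).coeff i = 0 := by
    intro i hi
    by_contra hc
    have := (vlm_eq_coe_iff.1 h0).2 i 1 hc
    rcases Prod.Lex.le_iff.1 this with h | ⟨h, h'⟩
    · simp only [ofLex_toLex] at h; omega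
    · simp only [ofLex_toLex] at h'
      exact absurd h' (by decide)
  have lc0 : (f0 0).coeff d0 ≠ 0 := (vlm_eq_coe_iff.1 h0).1
  have lc1 : (f1 1).coeff d1 ≠ 0 := (vlm_eq_coe_iff.1 h1).1
  -- components
  obtain ⟨a, b, hf00, hf01⟩ := span_pair_components hm0
  obtain ⟨c, d, hf10, hf11⟩ := span_pair_components hm1
  set u : Polynomial F := a * d - b * c with hu
  have hdet : f0 0 * f1 1 - f0 1 * f1 0 = u * X ^ (k + 1) := by
    rw [hf00, hf01, hf10, hf11, hu]; ring
  have hdcoeff : ∀ j, (u * X ^ (k + 1)).coeff (j + (k + 1)) = u.coeff j := fun j =>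
    Polynomial.coeff_mul_X_pow u (k + 1) j
  have hu0 : u.coeff 0 = (f0 0).coeff d0 * (f1 1).coeff d1 := by
    have h1' : (u * X ^ (k+1)).coeff (k+1) = u.coeff 0 := by
      have := hdcoeff 0
      rwa [zero_add] at this
    rw [← h1', ← hdet, Polynomial.coeff_sub, ← hsum, coeff_mul_at hz00 hz11,
      coeff_mul_eq_zero_ge hz01 hz10 (le_of_eq rfl), sub_zero]
  have hu0ne : u.coeff 0 ≠ 0 := by rw [hu0]; exact mul_ne_zero lc0 lc1
  have hupper : ∀ j, 1 ≤ j → u.coeff j = 0 := by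
    intro j hj
    rw [← hdcoeff j, ← hdet, Polynomial.coeff_sub,
      coeff_mul_eq_zero_hi hz00 hz11 (by omega),
      coeff_mul_eq_zero_ge hz01 hz10 (by omega), sub_zero]
  have huC : u = C (u.coeff 0) := by
    ext n
    rcases n with _ | n
    · simp
    · rw [Polynomial.coeff_C, if_neg (by omega), hupper (n+1) (by omega)]
  set e : F := (u.coeff 0)⁻¹ with he
  have hinv : C e * C (u.coeff 0) = 1 := by
    rw [← Polynomial.C_mul, he, inv_mul_cancel₀ hu0ne, Polynomial.C_1]
  -- generation
  have hgen0 : ![X ^ (k + 1), 0] ∈ Submodule.span (Polynomial F) ({f0, f1} :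
      Set (Fin 2 → Polynomial F)) := by
    refine Submodule.mem_span_pair.2 ⟨C e * d, C e * (-b), ?_⟩
    funext j
    fin_cases j
    · show C e * d * f0 0 + C e * (-b) * f1 0 = X ^ (k + 1)
      rw [hf00, hf10]
      linear_combination (C e * X ^ (k+1)) * huC + (X ^ (k+1)) * hinv
    · show C e * d * f0 1 + C e * (-b) * f1 1 = 0
      rw [hf01, hf11]; ring
  have hgen1 : ![-(sPoly S k), 1] ∈ Submodule.span (Polynomial F) ({f0, f1} :
      Set (Fin 2 → Polynomial F)) := by
    refine Submodule.mem_span_pair.2 ⟨C e * (-c), C e * a, ?_⟩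
    funext j
    fin_cases j
    · show C e * (-c) * f0 0 + C e * a * f1 0 = -(sPoly S k)
      rw [hf00, hf10]
      linear_combination (-(C e * sPoly S k)) * huC + (-(sPoly S k)) * hinv
    · show C e * (-c) * f0 1 + C e * a * f1 1 = 1
      rw [hf01, hf11]
      linear_combination C e * huC + hinv
  have hMle : Submodule.span (Polynomial F)
      ({![X ^ (k + 1), 0], ![-(sPoly S k), 1]} : Set (Fin 2 → Polynomial F)) ≤
      Submodule.span (Polynomial F) ({f0, f1} : Set (Fin 2 → Polynomial F)) := by
    rw [Submodule.span_le]
    rintro x (rfl | rfl)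
    · exact hgen0
    · exact hgen1
  constructor
  · constructor
    · intro x hx
      rw [Finset.coe_insert, Finset.coe_singleton] at hx
      rcases hx with rfl | rfl
      · exact hm0
      · exact hm1
    · have hGset : (({f0, f1} : Finset (Fin 2 → Polynomial F)) : Set (Fin 2 → Polynomial F))
          = {f0, f1} := by rw [Finset.coe_insert, Finset.coe_singleton]
      rw [hGset]
      apply le_antisymm
      · apply Submodule.span_mono
        apply Set.image_mono
        rintro x (rfl | rfl)
        · exact hm0
        · exact hm1
      · rw [ltSubmodule, Submodule.span_le]
        rintro _ ⟨f, hf, rfl⟩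
        show vlt f ∈ ltSubmodule ({f0, f1} : Set (Fin 2 → Polynomial F))
        rw [ltSubmodule, Set.image_pair]
        by_cases hfz : f = 0
        · rw [hfz, vlt_zero]; exact Submodule.zero_mem _
        obtain ⟨p, r, hpr⟩ := Submodule.mem_span_pair.1 (hMle hf)
        by_cases hp : p = 0
        · have hr : r ≠ 0 := by
            rintro rfl
            rw [hp, zero_smul, zero_smul, add_zero] at hpr
            exact hfz hpr.symm
          have : f = r • f1 := by rw [← hpr, hp, zero_smul, zero_add]
          rw [this, vlt_smul hr h1]
          exact Submodule.smul_mem _ _ (Submodule.subset_span (by simp))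
        by_cases hr : r = 0
        · have : f = p • f0 := by rw [← hpr, hr, zero_smul, add_zero]
          rw [this, vlt_smul hp h0]
          exact Submodule.smul_mem _ _ (Submodule.subset_span (by simp))
        · have hv0 := vlm_smul hp h0
          have hv1 := vlm_smul hr h1
          have hf' : f = p • f0 + r • f1 := hpr.symm
          rcases lt_trichotomy (vlm (p • f0)) (vlm (r • f1)) with hlt | heq | hgt
          · rw [hf', vlt_add_eq_right hlt, vlt_smul hr h1]
            exact Submodule.smul_mem _ _ (Submodule.subset_span (by simp))
          · exfalso
            rw [hv0, hv1] at heq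
            have := toLex_inj.1 (WithBot.coe_inj.1 heq)
            simp [Prod.ext_iff] at this
          · rw [hf', add_comm, vlt_add_eq_right hgt, vlt_smul hp h0]
            exact Submodule.smul_mem _ _ (Submodule.subset_span (by simp))
  · -- minimality
    intro gg hgg h hred
    obtain ⟨hgne, m, jv, α, β, hm, hmem, _, _, _, hvlm, _, _⟩ := hred
    have i0 : Fin m := ⟨0, hm⟩
    have hjv := hmem i0
    have hv := hvlm i0
    rcases Finset.mem_insert.1 hgg with rfl | hgg1
    · -- gg = f0, jv i0 = f1
      have : jv i0 = f1 := by
        have h' := Finset.mem_erase.1 hjv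
        rcases Finset.mem_insert.1 h'.2 with h'' | h''
        · exact absurd h'' h'.1
        · exact Finset.mem_singleton.1 h''
      rw [this, h1, h0] at hv
      rw [WithBot.map_coe] at hv
      have := toLex_inj.1 (WithBot.coe_inj.1 hv)
      simp [Prod.ext_iff, ofLex_toLex] at this
    · -- gg = f1
      have hgf1 : gg = f1 := Finset.mem_singleton.1 hgg1
      subst hgf1
      have : jv i0 = f0 := by
        have h' := Finset.mem_erase.1 hjv
        rcases Finset.mem_insert.1 h'.2 with h'' | h''
        · exact h''
        · exact absurd (Finset.mem_singleton.1 h'') h'.1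
      rw [this, h1, h0] at hv
      rw [WithBot.map_coe] at hv
      have := toLex_inj.1 (WithBot.coe_inj.1 hv)
      simp [Prod.ext_iff, ofLex_toLex] at this

end Core

section Main
variable {F : Type*} [Field F]

lemma core_groebner' (S : ℕ → F) (k d0 d1 : ℕ) (p0 p1 : Fin 2) (f0 f1 : Fin 2 → Polynomial F)
    (h0 : vlm f0 = (toLex (d0, p0) : Lex (ℕ × Fin 2)))
    (h1 : vlm f1 = (toLex (d1, p1) : Lex (ℕ × Fin 2)))
    (hp : p0 ≠ p1)
    (hsum : d0 + d1 = k + 1)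
    (hm0 : f0 ∈ Submodule.span (Polynomial F)
      ({![X ^ (k + 1), 0], ![-(sPoly S k), 1]} : Set (Fin 2 → Polynomial F)))
    (hm1 : f1 ∈ Submodule.span (Polynomial F)
      ({![X ^ (k + 1), 0], ![-(sPoly S k), 1]} : Set (Fin 2 → Polynomial F))) :
    IsMinimalGroebner
      (Submodule.span (Polynomial F)
        ({![X ^ (k + 1), 0], ![-(sPoly S k), 1]} : Set (Fin 2 → Polynomial F)))
      ({f0, f1} : Finset (Fin 2 → Polynomial F)) := by
  fin_cases p0 <;> fin_cases p1
  · exact absurd rfl hp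
  · exact core_groebner S k d0 d1 f0 f1 h0 h1 hsum hm0 hm1
  · rw [Finset.pair_comm]
    exact core_groebner S k d1 d0 f1 f0 h1 h0 (by omega) hm1 hm0
  · exact absurd rfl hp

lemma field_alg_invariant (S : ℕ → F) (N : ℕ) (g : ℕ → Fin 2 → Fin 2 → Polynomial F)
    (hrun : FieldAlgRun S N g) :
    ∀ k ≤ N, ∃ (d0 d1 : ℕ) (p0 p1 : Fin 2), p0 ≠ p1 ∧ d0 + d1 = k + 1 ∧
      vlm (g k 0) = (toLex (d0, p0) : Lex (ℕ × Fin 2)) ∧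
      vlm (g k 1) = (toLex (d1, p1) : Lex (ℕ × Fin 2)) ∧
      g k 0 ∈ Submodule.span (Polynomial F)
        ({![X ^ (k + 1), 0], ![-(sPoly S k), 1]} : Set (Fin 2 → Polynomial F)) ∧
      g k 1 ∈ Submodule.span (Polynomial F)
        ({![X ^ (k + 1), 0], ![-(sPoly S k), 1]} : Set (Fin 2 → Polynomial F)) := by
  obtain ⟨hg00, hg01, hstep⟩ := hrun
  intro k
  induction k with
  | zero =>
    intro _
    refine ⟨1, 0, 0, 1, by decide, rfl, ?_, ?_, ?_, ?_⟩
    · rw [hg00, vlm_eq_coe_iff]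
      refine ⟨by simp, ?_⟩
      intro i j hij
      rcases (by decide : ∀ jj : Fin 2, jj = 0 ∨ jj = 1) j with rfl | rfl
      · simp only [Matrix.cons_val_zero] at hij
        have h' : (X : F[X]).coeff i ≠ 0 := hij
        have hi : i = 1 := by
          by_contra hc
          rw [Polynomial.coeff_X, if_neg (fun h => hc h.symm)] at h'
          exact h' rfl
        subst hi
        exact le_rfl
      · exfalso; simpa using hij
    · rw [hg01, vlm_eq_coe_iff]
      refine ⟨by simp, ?_⟩
      intro i j hij
      rcases (by decide : ∀ jj : Fin 2, jj = 0 ∨ jj = 1) j with rfl | rfl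
      · exfalso; simpa using hij
      · simp only [Matrix.cons_val_one, Matrix.head_cons] at hij
        have h' : (1 : F[X]).coeff i ≠ 0 := hij
        have hi : i = 0 := by simpa [Polynomial.coeff_one] using h'
        subst hi
        exact le_rfl
    · rw [hg00]
      apply Submodule.subset_span
      left
      funext j; fin_cases j <;> simp
    · rw [hg01]
      apply Submodule.subset_span
      right
      show _ ∈ ({![-(sPoly S 0), 1]} : Set (Fin 2 → Polynomial F))
      rw [Set.mem_singleton_iff]
      funext j; fin_cases j <;> simp [sPoly]
  | succ n ih =>
    intro hk
    obtain ⟨D0, D1, P0, P1, hP, hD, h0', h1', hmem0, hmem1⟩ := ih (by omega)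
    obtain ⟨istar, hΔstar, hmin, hg0eq, hg1eq⟩ := hstep (n + 1) (by omega) hk
    simp only [Nat.add_sub_cancel] at hΔstar hmin hg0eq hg1eq
    -- divisibility data for old rows
    obtain ⟨q0, hq0⟩ := (mem_M_iff S n (g n 0)).1 hmem0
    obtain ⟨q1, hq1⟩ := (mem_M_iff S n (g n 1)).1 hmem1
    have hs : sPoly S (n + 1) = sPoly S n + C (S (n + 1)) * X ^ (n + 1) := by
      rw [sPoly, sPoly, Finset.sum_range_succ]
    set r0 : Polynomial F := q0 + g n 0 1 * C (S (n + 1)) with hr0def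
    set r1 : Polynomial F := q1 + g n 1 1 * C (S (n + 1)) with hr1def
    have hr0 : g n 0 0 + g n 0 1 * sPoly S (n + 1) = X ^ (n + 1) * r0 := by
      rw [hr0def, hs]; linear_combination hq0
    have hr1 : g n 1 0 + g n 1 1 * sPoly S (n + 1) = X ^ (n + 1) * r1 := by
      rw [hr1def, hs]; linear_combination hq1
    have hΔ0 : errVal S (n + 1) (g n 0) 0 = r0.coeff 0 := by
      rw [errVal_zero_eq_coeff, hr0, mul_comm]
      have := Polynomial.coeff_mul_X_pow r0 (n + 1) 0
      rwa [zero_add] at this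
    have hΔ1 : errVal S (n + 1) (g n 1) 0 = r1.coeff 0 := by
      rw [errVal_zero_eq_coeff, hr1, mul_comm]
      have := Polynomial.coeff_mul_X_pow r1 (n + 1) 0
      rwa [zero_add] at this
    -- membership of new rows
    have hXdvd : X ∣ (C (- errVal S (n+1) (g n 1) 0) * r0 + C (errVal S (n+1) (g n 0) 0) * r1) := by
      rw [Polynomial.X_dvd_iff]
      rw [Polynomial.coeff_add, Polynomial.coeff_C_mul, Polynomial.coeff_C_mul, ← hΔ0, ← hΔ1]
      ring
    obtain ⟨w, hw⟩ := hXdvd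
    have hnewmem1 : g (n+1) 1 ∈ Submodule.span (Polynomial F)
        ({![X ^ (n + 2), 0], ![-(sPoly S (n+1)), 1]} : Set (Fin 2 → Polynomial F)) := by
      rw [show n + 2 = (n + 1) + 1 from rfl, mem_M_iff]
      refine ⟨w, ?_⟩
      have e0 : g (n+1) 1 0 = C (- errVal S (n+1) (g n 1) 0) * g n 0 0
          + C (errVal S (n+1) (g n 0) 0) * g n 1 0 := by rw [hg1eq]; rfl
      have e1 : g (n+1) 1 1 = C (- errVal S (n+1) (g n 1) 0) * g n 0 1
          + C (errVal S (n+1) (g n 0) 0) * g n 1 1 := by rw [hg1eq]; rfl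
      rw [e0, e1]
      linear_combination C (- errVal S (n+1) (g n 1) 0) * hr0
        + C (errVal S (n+1) (g n 0) 0) * hr1 + X ^ (n+1) * hw
    rcases (by decide : ∀ i : Fin 2, i = 0 ∨ i = 1) istar with rfl | rfl
    · -- pivot is row 0
      have hinv : (errVal S (n+1) (g n 0) 0)⁻¹ ≠ 0 := inv_ne_zero hΔstar
      have hCX : (C (errVal S (n+1) (g n 0) 0)⁻¹ * X : Polynomial F) ≠ 0 :=
        mul_ne_zero (fun hc => hinv (by simpa using hc)) Polynomial.X_ne_zero
      have hCXdeg : (C (errVal S (n+1) (g n 0) 0)⁻¹ * X : Polynomial F).natDegree = 1 :=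
        Polynomial.natDegree_C_mul_X _ hinv
      have hnewmem0 : g (n+1) 0 ∈ Submodule.span (Polynomial F)
          ({![X ^ (n + 2), 0], ![-(sPoly S (n+1)), 1]} : Set (Fin 2 → Polynomial F)) := by
        rw [show n + 2 = (n + 1) + 1 from rfl, mem_M_iff]
        have e0 : g (n+1) 0 0 = (C (errVal S (n+1) (g n 0) 0)⁻¹ * X) * g n 0 0 := by
          rw [hg0eq]; rfl
        have e1 : g (n+1) 0 1 = (C (errVal S (n+1) (g n 0) 0)⁻¹ * X) * g n 0 1 := by
          rw [hg0eq]; rfl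
        rw [e0, e1]
        exact ⟨C (errVal S (n+1) (g n 0) 0)⁻¹ * r0,
          by linear_combination (C (errVal S (n+1) (g n 0) 0)⁻¹ * X) * hr0⟩
      have hv0 : vlm (g (n+1) 0) = (toLex (1 + D0, P0) : Lex (ℕ × Fin 2)) := by
        rw [hg0eq]
        have := vlm_smul hCX h0'
        rwa [hCXdeg] at this
      have hv1 : vlm (g (n+1) 1) = (toLex (D1, P1) : Lex (ℕ × Fin 2)) := by
        by_cases hd1 : errVal S (n+1) (g n 1) 0 = 0
        · rw [hg1eq, hd1, neg_zero, Polynomial.C_0, zero_smul, zero_add]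
          have := vlm_smul (f := g n 1) (a := C (errVal S (n+1) (g n 0) 0))
            (fun hc => hΔstar (by simpa using hc)) h1'
          rwa [Polynomial.natDegree_C, zero_add] at this
        · have hlt : vlm (C (- errVal S (n+1) (g n 1) 0) • g n 0)
              < vlm (C (errVal S (n+1) (g n 0) 0) • g n 1) := by
            rw [vlm_smul (by simpa using hd1 : (C (- errVal S (n+1) (g n 1) 0) : Polynomial F) ≠ 0) h0',
              vlm_smul (fun hc => hΔstar (by simpa using hc) : (C (errVal S (n+1) (g n 0) 0) : Polynomial F) ≠ 0) h1',
              Polynomial.natDegree_C, Polynomial.natDegree_C, zero_add, zero_add]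
            have hle := hmin 1 hd1
            rw [h0', h1'] at hle
            rcases lt_or_eq_of_le hle with h | h
            · exact_mod_cast h
            · exfalso
              have := toLex_inj.1 (WithBot.coe_inj.1 h)
              exact hP (congrArg Prod.snd this)
          rw [hg1eq, vlm_add_eq_right hlt,
            vlm_smul (fun hc => hΔstar (by simpa using hc) : (C (errVal S (n+1) (g n 0) 0) : Polynomial F) ≠ 0) h1',
            Polynomial.natDegree_C, zero_add]
      exact ⟨1 + D0, D1, P0, P1, hP, by omega, hv0, hv1, hnewmem0, hnewmem1⟩
    · -- pivot is row 1
      have hinv : (errVal S (n+1) (g n 1) 0)⁻¹ ≠ 0 := inv_ne_zero hΔstar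
      have hCX : (C (errVal S (n+1) (g n 1) 0)⁻¹ * X : Polynomial F) ≠ 0 :=
        mul_ne_zero (fun hc => hinv (by simpa using hc)) Polynomial.X_ne_zero
      have hCXdeg : (C (errVal S (n+1) (g n 1) 0)⁻¹ * X : Polynomial F).natDegree = 1 :=
        Polynomial.natDegree_C_mul_X _ hinv
      have hnewmem0 : g (n+1) 0 ∈ Submodule.span (Polynomial F)
          ({![X ^ (n + 2), 0], ![-(sPoly S (n+1)), 1]} : Set (Fin 2 → Polynomial F)) := by
        rw [show n + 2 = (n + 1) + 1 from rfl, mem_M_iff]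
        have e0 : g (n+1) 0 0 = (C (errVal S (n+1) (g n 1) 0)⁻¹ * X) * g n 1 0 := by
          rw [hg0eq]; rfl
        have e1 : g (n+1) 0 1 = (C (errVal S (n+1) (g n 1) 0)⁻¹ * X) * g n 1 1 := by
          rw [hg0eq]; rfl
        rw [e0, e1]
        exact ⟨C (errVal S (n+1) (g n 1) 0)⁻¹ * r1,
          by linear_combination (C (errVal S (n+1) (g n 1) 0)⁻¹ * X) * hr1⟩
      have hv0 : vlm (g (n+1) 0) = (toLex (1 + D1, P1) : Lex (ℕ × Fin 2)) := by
        rw [hg0eq]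
        have := vlm_smul hCX h1'
        rwa [hCXdeg] at this
      have hv1 : vlm (g (n+1) 1) = (toLex (D0, P0) : Lex (ℕ × Fin 2)) := by
        have hCne : (C (- errVal S (n+1) (g n 1) 0) : Polynomial F) ≠ 0 := by
          simpa using hΔstar
        by_cases hd0 : errVal S (n+1) (g n 0) 0 = 0
        · rw [hg1eq, hd0, Polynomial.C_0, zero_smul, add_zero]
          have := vlm_smul hCne h0'
          rwa [Polynomial.natDegree_C, zero_add] at this
        · have hCne0 : (C (errVal S (n+1) (g n 0) 0) : Polynomial F) ≠ 0 := by simpa using hd0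
          have hlt : vlm (C (errVal S (n+1) (g n 0) 0) • g n 1)
              < vlm (C (- errVal S (n+1) (g n 1) 0) • g n 0) := by
            rw [vlm_smul hCne0 h1', vlm_smul hCne h0',
              Polynomial.natDegree_C, Polynomial.natDegree_C, zero_add, zero_add]
            have hle := hmin 0 hd0
            rw [h0', h1'] at hle
            rcases lt_or_eq_of_le hle with h | h
            · exact_mod_cast h
            · exfalso
              have := toLex_inj.1 (WithBot.coe_inj.1 h)
              exact hP (congrArg Prod.snd this).symm
          rw [hg1eq, add_comm, vlm_add_eq_right hlt, vlm_smul hCne h0',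
            Polynomial.natDegree_C, zero_add]
      exact ⟨1 + D1, D0, P1, P0, Ne.symm hP, by omega, hv0, hv1, hnewmem0, hnewmem1⟩

end Main
/-- For every `k`, the rows of the matrix `R^k` produced by the field algorithm form a minimal
Gröbner basis (top ordering) of the row space of `[[x^(k+1), 0], [-(S_k x^k + ⋯ + S_1 x), 1]]`. -/
theorem field_algorithm_minimal_groebner {F : Type*} [Field F] (S : ℕ → F) (N : ℕ)
    (g : ℕ → Fin 2 → Fin 2 → Polynomial F) (hrun : FieldAlgRun S N g) :
    ∀ k ≤ N,
      IsMinimalGroebner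
        (Submodule.span (Polynomial F)
          ({![X ^ (k + 1), 0],
            ![-(∑ i ∈ Finset.range k, C (S (i + 1)) * X ^ (i + 1)), 1]} :
            Set (Fin 2 → Polynomial F)))
        ({g k 0, g k 1} : Finset (Fin 2 → Polynomial F)) := by
  intro k hk
  obtain ⟨d0, d1, p0, p1, hp, hsum, h0, h1, hm0, hm1⟩ := field_alg_invariant S N g hrun k hk
  exact core_groebner' S k d0 d1 p0 p1 (g k 0) (g k 1) h0 h1 hp hsum hm0 hm1
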